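/- Let λ,μ > 0 and let g : ℝ → ℝ be continuous satisfying (g1) and (g3): lim_{t→0} g(t)/t = 0. Then there exist ρ > 0 and α > 0 such that E_{λ,μ}(u) ≥ α for every u ∈ X₀ with ‖u‖ = ρ, where E_{λ,μ}(u) := (1/2)‖u‖² − (μ/2*)∫_Ω |u|^{2*} dx − λ∫_Ω G(u) dx. -/

import Mathlib

open MeasureTheory Filter Topology Set

noncomputable section

/-- Euclidean space `ℝⁿ`. -/
abbrev EV (n : ℕ) := EuclideanSpace ℝ (Fin n)

/-- The fractional critical Sobolev exponent `2* = 2n/(n-2s)`. -/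
def twoStar (n : ℕ) (s : ℝ) : ℝ := 2 * n / (n - 2 * s)

/-- Gagliardo-type bilinear form `⟨u,v⟩ = ∬ (u(x)-u(y))(v(x)-v(y)) K(x-y) dx dy`. -/
def gInner {n : ℕ} (K : EV n → ℝ) (u v : EV n → ℝ) : ℝ :=
  ∫ p : EV n × EV n, (u p.1 - u p.2) * (v p.1 - v p.2) * K (p.1 - p.2)

/-- Gagliardo norm `‖u‖ = ⟨u,u⟩^{1/2}`. -/
def gNorm {n : ℕ} (K : EV n → ℝ) (u : EV n → ℝ) : ℝ := Real.sqrt (gInner K u u)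

/-- Membership in the space `X₀`: measurable, vanishing a.e. outside `Ω`,
with finite Gagliardo seminorm. -/
structure MemX0 {n : ℕ} (K : EV n → ℝ) (Ω : Set (EV n)) (u : EV n → ℝ) : Prop where
  meas : Measurable u
  zero : ∀ᵐ x ∂(volume : Measure (EV n)), x ∉ Ω → u x = 0
  fin : Integrable (fun p : EV n × EV n => (u p.1 - u p.2) ^ 2 * K (p.1 - p.2))

/-- `L^p` norm (real exponent `p`) on `Ω`. -/
def lpNorm {n : ℕ} (Ω : Set (EV n)) (p : ℝ) (u : EV n → ℝ) : ℝ :=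
  (∫ x in Ω, |u x| ^ p) ^ (1 / p)

/-- Weak convergence in `X₀`. -/
def WeakConv {n : ℕ} (K : EV n → ℝ) (Ω : Set (EV n)) (uj : ℕ → EV n → ℝ)
    (u : EV n → ℝ) : Prop :=
  ∀ v, MemX0 K Ω v → Tendsto (fun j => gInner K (uj j) v) atTop (𝓝 (gInner K u v))

/-- The singular kernel `|x|^{-(n+2s)}` of the fractional Laplacian. -/
def fracKernel (n : ℕ) (s : ℝ) : EV n → ℝ := fun x => ‖x‖ ^ (-((n : ℝ) + 2 * s))

/-- The energy functional `E_{λ,μ}`. -/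
def energy {n : ℕ} (s : ℝ) (K : EV n → ℝ) (Ω : Set (EV n)) (μ lam : ℝ)
    (g : ℝ → ℝ) (u : EV n → ℝ) : ℝ :=
  1 / 2 * gNorm K u ^ 2 - μ / twoStar n s * (∫ x in Ω, |u x| ^ twoStar n s)
    - lam * ∫ x in Ω, (∫ τ in (0:ℝ)..(u x), g τ)

/-- The functional `Ê_μ`. -/
def energyHat {n : ℕ} (s : ℝ) (K : EV n → ℝ) (Ω : Set (EV n)) (μ : ℝ)
    (u : EV n → ℝ) : ℝ :=
  1 / 2 * gNorm K u ^ 2 - μ / twoStar n s * (∫ x in Ω, |u x| ^ twoStar n s)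

/-- The functional `Ẽ_{λ,μ}`. -/
def energyTilde {n : ℕ} (s : ℝ) (K : EV n → ℝ) (Ω : Set (EV n)) (μ lam : ℝ)
    (g : ℝ → ℝ) (u : EV n → ℝ) : ℝ :=
  μ / twoStar n s * (∫ x in Ω, |u x| ^ twoStar n s)
    + lam * ∫ x in Ω, (∫ τ in (0:ℝ)..(u x), g τ)

/-- The energy functional of the singular problem. -/
def energySing {n : ℕ} (s : ℝ) (K : EV n → ℝ) (Ω : Set (EV n)) (μ lam r : ℝ)
    (g : ℝ → ℝ) (u : EV n → ℝ) : ℝ :=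
  1 / 2 * gNorm K u ^ 2 - μ / twoStar n s * (∫ x in Ω, (max (u x) 0) ^ twoStar n s)
    - lam / r * (∫ x in Ω, (max (u x) 0) ^ r)
    - lam * ∫ x in Ω, (∫ τ in (0:ℝ)..(max (u x) 0), g τ)


/-- truncation -/
def trunc (N a : ℝ) : ℝ := max (min a N) (-N)

lemma trunc_lip (N a b : ℝ) : |trunc N a - trunc N b| ≤ |a - b| := by
  unfold trunc
  refine (abs_max_sub_max_le_abs _ _ _).trans ?_
  simpa using abs_min_sub_min_le_max a N b N

lemma trunc_zero (N : ℝ) (hN : 0 ≤ N) : trunc N 0 = 0 := by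
  unfold trunc
  rw [min_eq_left hN, max_eq_left (by linarith)]

lemma abs_trunc_le (N a : ℝ) (hN : 0 ≤ N) : |trunc N a| ≤ |a| := by
  have := trunc_lip N a 0
  rw [trunc_zero N hN] at this
  simpa using this

lemma abs_trunc_le' (N a : ℝ) (hN : 0 ≤ N) : |trunc N a| ≤ N := by
  unfold trunc
  rw [abs_le]
  constructor
  · exact le_max_right _ _
  · exact max_le (min_le_right _ _) (by linarith)

lemma trunc_eq_self (N a : ℝ) (h : |a| ≤ N) : trunc N a = a := by
  rw [abs_le] at h
  unfold trunc
  rw [min_eq_left h.2, max_eq_left h.1]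

lemma trunc_mono_abs (N M a : ℝ) (hN : 0 ≤ N) (hNM : N ≤ M) : |trunc N a| ≤ |trunc M a| := by
  rcases le_total a 0 with h | h
  · have h1 : trunc N a = max a (-N) := by unfold trunc; rw [min_eq_left (by linarith)]
    have h2 : trunc M a = max a (-M) := by unfold trunc; rw [min_eq_left (by linarith)]
    rw [h1, h2, abs_of_nonpos (by simp [h]; linarith), abs_of_nonpos (by simp [h]; linarith)]
    simp only [neg_le_neg_iff]
    exact max_le_max le_rfl (by linarith)
  · have hM : 0 ≤ M := hN.trans hNM
    have h1 : trunc N a = min a N := by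
      unfold trunc; rw [max_eq_left (le_min (by linarith) (by linarith))]
    have h2 : trunc M a = min a M := by
      unfold trunc; rw [max_eq_left (le_min (by linarith) (by linarith))]
    rw [h1, h2, abs_of_nonneg (le_min h hN), abs_of_nonneg (le_min h hM)]
    exact min_le_min le_rfl hNM

lemma sub_preimage_null {n : ℕ} (hn : 1 ≤ n) {s : Set (EV n)}
    (hs : (volume : Measure (EV n)) s = 0) :
    (volume : Measure (EV n × EV n)) {p | p.1 - p.2 ∈ s} = 0 := by
  obtain ⟨t, hst, htm, ht0⟩ := exists_measurable_superset_of_null hs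
  have hT : MeasurePreserving (fun z : (EV n) × (EV n) => (z.1 - z.2, z.2))
      (volume : Measure (EV n × EV n)) volume := by
    rw [Measure.volume_eq_prod]
    exact measurePreserving_sub_prod volume volume
  have h1 : {p : EV n × EV n | p.1 - p.2 ∈ s} ⊆
      (fun z : (EV n) × (EV n) => (z.1 - z.2, z.2)) ⁻¹' (t ×ˢ univ) := by
    intro p hp
    exact ⟨hst hp, trivial⟩
  refine measure_mono_null h1 ?_
  rw [hT.measure_preimage (htm.prod MeasurableSet.univ).nullMeasurableSet,
    Measure.volume_eq_prod, Measure.prod_prod, ht0, zero_mul]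

lemma diag_null {n : ℕ} (hn : 1 ≤ n) :
    (volume : Measure (EV n × EV n)) {p | p.1 = p.2} = 0 := by
  haveI : NeZero n := ⟨by omega⟩
  have h0 : (volume : Measure (EV n)) {0} = 0 := measure_singleton 0
  have := sub_preimage_null hn h0
  refine measure_mono_null ?_ this
  intro p hp
  simp only [mem_setOf_eq, mem_singleton_iff] at *
  rw [hp, sub_self]

lemma K_aesm {n : ℕ} (hn : 1 ≤ n) (K : EV n → ℝ)
    (hK1 : Integrable (fun x : EV n => min (‖x‖ ^ 2) 1 * K x)) :
    AEStronglyMeasurable K (volume : Measure (EV n)) := by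
  haveI : NeZero n := ⟨by omega⟩
  have h0 : (volume : Measure (EV n)) {0} = 0 := measure_singleton 0
  have hm : Measurable (fun x : EV n => (min (‖x‖ ^ 2) 1)⁻¹) :=
    ((measurable_norm.pow_const 2).min measurable_const).inv
  have haesm : AEStronglyMeasurable
      (fun x : EV n => (min (‖x‖ ^ 2) 1)⁻¹ * (min (‖x‖ ^ 2) 1 * K x)) volume :=
    (hm.aestronglyMeasurable).mul hK1.aestronglyMeasurable
  refine haesm.congr ?_
  have : ∀ᵐ x : EV n ∂volume, x ≠ 0 := by
    rw [ae_iff]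
    simpa using h0
  filter_upwards [this] with x hx
  have hpos : 0 < min (‖x‖ ^ 2) 1 := by
    have : 0 < ‖x‖ := norm_pos_iff.mpr hx
    have : 0 < ‖x‖ ^ 2 := by positivity
    simp [lt_min_iff, this]
  field_simp

lemma Kcomp_aesm {n : ℕ} (hn : 1 ≤ n) (K : EV n → ℝ)
    (hK1 : Integrable (fun x : EV n => min (‖x‖ ^ 2) 1 * K x)) :
    AEStronglyMeasurable (fun p : EV n × EV n => K (p.1 - p.2)) volume := by
  obtain ⟨K', hK'm, hae⟩ := K_aesm hn K hK1
  refine ⟨fun p => K' (p.1 - p.2),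
    hK'm.comp_measurable (measurable_fst.sub measurable_snd), ?_⟩
  have hbad : (volume : Measure (EV n)) {x | K x ≠ K' x} = 0 := by
    rw [EventuallyEq, ae_iff] at hae; exact hae
  have h2 := sub_preimage_null hn hbad
  rw [EventuallyEq, ae_iff]
  exact measure_mono_null (fun p hp => hp) h2

lemma measurable_trunc (N : ℝ) : Measurable (trunc N) :=
  (measurable_id.min measurable_const).max measurable_const

lemma ae_offdiag {n : ℕ} (hn : 1 ≤ n) :
    ∀ᵐ p : EV n × EV n ∂volume, p.1 ≠ p.2 := by
  rw [ae_iff]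
  simpa using diag_null hn

lemma gInner_self_eq {n : ℕ} (K : EV n → ℝ) (f : EV n → ℝ) :
    gInner K f f = ∫ p : EV n × EV n, (f p.1 - f p.2) ^ 2 * K (p.1 - p.2) := by
  unfold gInner
  congr 1
  ext p
  ring

lemma trunc_memX0 {n : ℕ} (hn : 1 ≤ n) {K : EV n → ℝ} {Ω : Set (EV n)}
    (hKpos : ∀ x : EV n, x ≠ 0 → 0 < K x)
    (hK1 : Integrable (fun x : EV n => min (‖x‖ ^ 2) 1 * K x))
    {u : EV n → ℝ} (hu : MemX0 K Ω u) (N : ℝ) (hN : 0 ≤ N) :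
    MemX0 K Ω (fun x => trunc N (u x)) ∧
      gNorm K (fun x => trunc N (u x)) ≤ gNorm K u := by
  have hdiff : ∀ᵐ p : EV n × EV n ∂volume,
      ‖(trunc N (u p.1) - trunc N (u p.2)) ^ 2 * K (p.1 - p.2)‖
        ≤ (u p.1 - u p.2) ^ 2 * K (p.1 - p.2) := by
    filter_upwards [ae_offdiag hn] with p hp
    have hKp : 0 < K (p.1 - p.2) := hKpos _ (sub_ne_zero.mpr hp)
    have h1 : (trunc N (u p.1) - trunc N (u p.2)) ^ 2 ≤ (u p.1 - u p.2) ^ 2 := by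
      have h2 := trunc_lip N (u p.1) (u p.2)
      calc (trunc N (u p.1) - trunc N (u p.2)) ^ 2
          = |trunc N (u p.1) - trunc N (u p.2)| ^ 2 := (sq_abs _).symm
        _ ≤ |u p.1 - u p.2| ^ 2 := by
            exact pow_le_pow_left₀ (abs_nonneg _) h2 2
        _ = (u p.1 - u p.2) ^ 2 := sq_abs _
    rw [Real.norm_eq_abs, abs_of_nonneg (by positivity)]
    exact mul_le_mul_of_nonneg_right h1 hKp.le
  have haesm : AEStronglyMeasurable
      (fun p : EV n × EV n => (trunc N (u p.1) - trunc N (u p.2)) ^ 2 * K (p.1 - p.2))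
      volume := by
    refine AEStronglyMeasurable.mul ?_ (Kcomp_aesm hn K hK1)
    exact (((((measurable_trunc N).comp hu.meas).comp measurable_fst).sub
      (((measurable_trunc N).comp hu.meas).comp measurable_snd)).pow_const 2).aestronglyMeasurable
  have hfin : Integrable (fun p : EV n × EV n =>
      (trunc N (u p.1) - trunc N (u p.2)) ^ 2 * K (p.1 - p.2)) :=
    Integrable.mono' hu.fin haesm hdiff
  have hmem : MemX0 K Ω (fun x => trunc N (u x)) := by
    refine ⟨(measurable_trunc N).comp hu.meas, ?_, hfin⟩
    filter_upwards [hu.zero] with x hx hxo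
    rw [hx hxo, trunc_zero N hN]
  refine ⟨hmem, ?_⟩
  unfold gNorm
  apply Real.sqrt_le_sqrt
  rw [gInner_self_eq, gInner_self_eq]
  refine integral_mono_ae hfin hu.fin ?_
  filter_upwards [hdiff] with p hp
  exact (le_abs_self _).trans hp

lemma meas_rpow {α : Type*} [MeasurableSpace α] {f : α → ℝ} (hf : Measurable f) (p : ℝ) :
    Measurable (fun x => |f x| ^ p) := by fun_prop

lemma lp_bound {n : ℕ} (hn : 1 ≤ n) {K : EV n → ℝ} {Ω : Set (EV n)}
    (hΩm : MeasurableSet Ω)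
    (hKpos : ∀ x : EV n, x ≠ 0 → 0 < K x)
    (hK1 : Integrable (fun x : EV n => min (‖x‖ ^ 2) 1 * K x))
    (hΩfin : volume Ω < ⊤)
    {p : ℝ} (hp : 0 < p) {cp : ℝ} (hcp : 0 < cp)
    (hembp : ∀ u, MemX0 K Ω u → lpNorm Ω p u ≤ cp * gNorm K u)
    {u : EV n → ℝ} (hu : MemX0 K Ω u) :
    IntegrableOn (fun x => |u x| ^ p) Ω ∧
      ∫ x in Ω, |u x| ^ p ≤ (cp * gNorm K u) ^ p := by
  set M := cp * gNorm K u with hM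
  have hM0 : 0 ≤ M := mul_nonneg hcp.le (Real.sqrt_nonneg _)
  have hpow : ∀ {A : ℝ}, 0 ≤ A → A ^ (1/p) ≤ M → A ≤ M ^ p := by
    intro A hA h
    have h1 : A = (A ^ (1/p)) ^ p := by
      rw [← Real.rpow_mul hA, one_div, inv_mul_cancel₀ hp.ne', Real.rpow_one]
    rw [h1]
    exact Real.rpow_le_rpow (Real.rpow_nonneg hA _) h hp.le
  have hμΩ : IsFiniteMeasure (volume.restrict Ω) :=
    ⟨by rwa [Measure.restrict_apply_univ]⟩
  -- bound for each truncation
  have htrunc : ∀ N : ℕ, IntegrableOn (fun x => |trunc (N:ℝ) (u x)| ^ p) Ω ∧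
      ∫ x in Ω, |trunc (N:ℝ) (u x)| ^ p ≤ M ^ p := by
    intro N
    obtain ⟨hmem, hnorm⟩ := trunc_memX0 hn hKpos hK1 hu (N:ℝ) (Nat.cast_nonneg N)
    have hint : IntegrableOn (fun x => |trunc (N:ℝ) (u x)| ^ p) Ω := by
      refine Integrable.mono' (integrable_const ((N:ℝ) ^ p)) ?_ ?_
      · exact (meas_rpow ((measurable_trunc _).comp hu.meas) p).aestronglyMeasurable
      · refine Filter.Eventually.of_forall fun x => ?_
        rw [Real.norm_eq_abs, abs_of_nonneg (Real.rpow_nonneg (abs_nonneg _) p)]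
        exact Real.rpow_le_rpow (abs_nonneg _) (abs_trunc_le' _ _ (Nat.cast_nonneg N)) hp.le
    refine ⟨hint, ?_⟩
    have hlp : lpNorm Ω p (fun x => trunc (N:ℝ) (u x)) ≤ M :=
      (hembp _ hmem).trans (mul_le_mul_of_nonneg_left hnorm hcp.le)
    exact hpow (setIntegral_nonneg hΩm fun x _ => Real.rpow_nonneg (abs_nonneg _) p) hlp
  -- monotone convergence
  have hkey : ∫⁻ x in Ω, ENNReal.ofReal (|u x| ^ p) ≤ ENNReal.ofReal (M ^ p) := by
    have hsup : ∀ x, ⨆ N : ℕ, ENNReal.ofReal (|trunc (N:ℝ) (u x)| ^ p)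
        = ENNReal.ofReal (|u x| ^ p) := by
      intro x
      refine le_antisymm (iSup_le fun N => ENNReal.ofReal_le_ofReal
        (Real.rpow_le_rpow (abs_nonneg _) (abs_trunc_le _ _ (Nat.cast_nonneg N)) hp.le)) ?_
      refine le_iSup_of_le ⌈|u x|⌉₊ (le_of_eq ?_)
      rw [trunc_eq_self _ _ (Nat.le_ceil _)]
    have hMCT : ∫⁻ x in Ω, ⨆ N : ℕ, ENNReal.ofReal (|trunc (N:ℝ) (u x)| ^ p)
        = ⨆ N : ℕ, ∫⁻ x in Ω, ENNReal.ofReal (|trunc (N:ℝ) (u x)| ^ p) := by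
      refine lintegral_iSup (fun N => ?_) ?_
      · exact (meas_rpow ((measurable_trunc _).comp hu.meas) p).ennreal_ofReal
      · intro N M' hNM x
        exact ENNReal.ofReal_le_ofReal (Real.rpow_le_rpow (abs_nonneg _)
          (trunc_mono_abs _ _ _ (Nat.cast_nonneg N) (Nat.cast_le.mpr hNM)) hp.le)
    calc ∫⁻ x in Ω, ENNReal.ofReal (|u x| ^ p)
        = ⨆ N : ℕ, ∫⁻ x in Ω, ENNReal.ofReal (|trunc (N:ℝ) (u x)| ^ p) := by
          rw [← hMCT]; exact lintegral_congr fun x => (hsup x).symm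
      _ ≤ ENNReal.ofReal (M ^ p) := by
          refine iSup_le fun N => ?_
          rw [← MeasureTheory.ofReal_integral_eq_lintegral_ofReal (htrunc N).1
            (Filter.Eventually.of_forall fun x => Real.rpow_nonneg (abs_nonneg _) p)]
          exact ENNReal.ofReal_le_ofReal (htrunc N).2
  have haesm : AEStronglyMeasurable (fun x => |u x| ^ p) (volume.restrict Ω) :=
    (meas_rpow hu.meas p).aestronglyMeasurable
  have hnonneg : 0 ≤ᵐ[volume.restrict Ω] fun x => |u x| ^ p :=
    Filter.Eventually.of_forall fun x => Real.rpow_nonneg (abs_nonneg _) p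
  have hintu : IntegrableOn (fun x => |u x| ^ p) Ω := by
    refine ⟨haesm, ?_⟩
    rw [hasFiniteIntegral_iff_ofReal hnonneg]
    exact lt_of_le_of_lt hkey ENNReal.ofReal_lt_top
  refine ⟨hintu, ?_⟩
  rw [MeasureTheory.integral_eq_lintegral_of_nonneg_ae hnonneg haesm]
  exact ENNReal.toReal_le_of_le_ofReal (by positivity) hkey

lemma g_zero (g : ℝ → ℝ) (hgc : Continuous g)
    (hg3 : Tendsto (fun t : ℝ => g t / t) (𝓝[≠] 0) (𝓝 0)) : g 0 = 0 := by
  have h1 : Tendsto g (𝓝[≠] (0:ℝ)) (𝓝 (g 0)) :=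
    (hgc.tendsto 0).mono_left nhdsWithin_le_nhds
  have h2 : Tendsto g (𝓝[≠] (0:ℝ)) (𝓝 0) := by
    have hid : Tendsto (fun t : ℝ => t) (𝓝[≠] (0:ℝ)) (𝓝 0) :=
      (continuous_id.tendsto 0).mono_left nhdsWithin_le_nhds
    have := hg3.mul hid
    rw [mul_zero] at this
    refine this.congr' ?_
    filter_upwards [self_mem_nhdsWithin] with t ht
    exact div_mul_cancel₀ _ ht
  exact tendsto_nhds_unique h1 h2

lemma g_global_bound (g : ℝ → ℝ) (hgc : Continuous g) (a₁ a₂ q r : ℝ)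
    (ha₁ : 0 < a₁) (ha₂ : 0 < a₂)
    (hq₁ : 1 ≤ q) (hqr : q < r) (h2r : 2 < r)
    (hg1 : ∀ t : ℝ, |g t| ≤ a₁ + a₂ * |t| ^ (q - 1))
    (hg3 : Tendsto (fun t : ℝ => g t / t) (𝓝[≠] 0) (𝓝 0))
    (ε : ℝ) (hε : 0 < ε) :
    ∃ C ≥ (0:ℝ), ∀ t : ℝ, |g t| ≤ ε * |t| + C * |t| ^ (r - 1) := by
  have h0 : g 0 = 0 := g_zero g hgc hg3
  -- δ from hg3
  have hev : ∀ᶠ t in 𝓝[≠] (0:ℝ), |g t / t| < ε := by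
    have h := Metric.tendsto_nhds.mp hg3 ε hε
    filter_upwards [h] with t h'
    rw [Real.dist_eq, sub_zero] at h'
    exact h'
  rw [eventually_nhdsWithin_iff] at hev
  obtain ⟨δ, hδ0, hδ⟩ := Metric.eventually_nhds_iff.mp hev
  have ha₁' : 0 ≤ a₁ := ha₁.le
  have ha₂' : 0 ≤ a₂ := ha₂.le
  refine ⟨a₁ / δ ^ (r - 1) + a₂ / δ ^ (r - q), by positivity, fun t => ?_⟩
  set C := a₁ / δ ^ (r - 1) + a₂ / δ ^ (r - q) with hC
  have hC0 : 0 ≤ C := by positivity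
  rcases lt_or_ge (|t|) δ with ht | ht
  · -- small t
    have hgt : |g t| ≤ ε * |t| := by
      rcases eq_or_ne t 0 with rfl | ht0
      · simp [h0]
      · have := hδ (y := t) (by simpa [Real.dist_eq] using ht) (by simpa using ht0)
        have habs : |g t| = |g t / t| * |t| := by
          rw [abs_div]
          field_simp
        rw [habs]
        exact mul_le_mul_of_nonneg_right this.le (abs_nonneg t)
    exact hgt.trans (le_add_of_nonneg_right (by positivity))
  · -- large t
    have ht0 : 0 < |t| := lt_of_lt_of_le hδ0 ht
    have h1 : δ ^ (r - 1) ≤ |t| ^ (r - 1) :=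
      Real.rpow_le_rpow hδ0.le ht (by linarith)
    have h2 : a₁ ≤ a₁ / δ ^ (r - 1) * |t| ^ (r - 1) := by
      rw [div_mul_eq_mul_div, le_div_iff₀ (by positivity)]
      exact mul_le_mul_of_nonneg_left h1 ha₁'
    have h3 : |t| ^ (q - 1) * δ ^ (r - q) ≤ |t| ^ (r - 1) := by
      have : |t| ^ (q - 1) * |t| ^ (r - q) = |t| ^ (r - 1) := by
        rw [← Real.rpow_add ht0]
        ring_nf
      rw [← this]
      exact mul_le_mul_of_nonneg_left
        (Real.rpow_le_rpow hδ0.le ht (by linarith)) (Real.rpow_nonneg (abs_nonneg t) _)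
    have h4 : a₂ * |t| ^ (q - 1) ≤ a₂ / δ ^ (r - q) * |t| ^ (r - 1) := by
      rw [div_mul_eq_mul_div, le_div_iff₀ (by positivity)]
      calc a₂ * |t| ^ (q - 1) * δ ^ (r - q) = a₂ * (|t| ^ (q - 1) * δ ^ (r - q)) := by ring
        _ ≤ a₂ * |t| ^ (r - 1) := mul_le_mul_of_nonneg_left h3 ha₂'
        _ = a₂ * |t| ^ (r - 1) := rfl
    calc |g t| ≤ a₁ + a₂ * |t| ^ (q - 1) := hg1 t
      _ ≤ a₁ / δ ^ (r - 1) * |t| ^ (r - 1) + a₂ / δ ^ (r - q) * |t| ^ (r - 1) := by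
          linarith
      _ = C * |t| ^ (r - 1) := by rw [hC]; ring
      _ ≤ ε * |t| + C * |t| ^ (r - 1) := le_add_of_nonneg_left (by positivity)

lemma G_bound (g : ℝ → ℝ) (hgc : Continuous g) (ε C r : ℝ)
    (hε : 0 ≤ ε) (hC : 0 ≤ C) (hr : 1 ≤ r)
    (hg : ∀ t : ℝ, |g t| ≤ ε * |t| + C * |t| ^ (r - 1)) :
    ∀ t : ℝ, |∫ τ in (0:ℝ)..t, g τ| ≤ ε * t ^ 2 + C * |t| ^ r := by
  intro t
  rcases eq_or_ne t 0 with rfl | ht0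
  · simp [intervalIntegral.integral_same]
    positivity
  have ht : 0 < |t| := abs_pos.mpr ht0
  have hb : ∀ x ∈ Set.uIoc (0:ℝ) t, ‖g x‖ ≤ ε * |t| + C * |t| ^ (r - 1) := by
    intro x hx
    have hxt : |x| ≤ |t| := by
      rcases Set.mem_uIoc.mp hx with ⟨h1, h2⟩ | ⟨h1, h2⟩
      · rw [abs_of_pos h1, abs_of_nonneg (h1.le.trans h2)]; exact h2
      · rw [abs_of_nonpos h2, abs_of_neg (h1.trans_le h2)]; linarith
    rw [Real.norm_eq_abs]
    refine (hg x).trans ?_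
    have := Real.rpow_le_rpow (abs_nonneg x) hxt (by linarith : (0:ℝ) ≤ r - 1)
    have h2 := mul_le_mul_of_nonneg_left hxt hε
    have h3 := mul_le_mul_of_nonneg_left this hC
    linarith
  have := intervalIntegral.norm_integral_le_of_norm_le_const hb
  rw [Real.norm_eq_abs] at this
  refine this.trans (le_of_eq ?_)
  have h1 : |t| ^ (r - 1) * |t| = |t| ^ r := by
    nth_rewrite 2 [← Real.rpow_one (|t|)]
    rw [← Real.rpow_add ht]
    ring_nf
  rw [sub_zero]
  calc (ε * |t| + C * |t| ^ (r - 1)) * |t|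
      = ε * (|t| * |t|) + C * (|t| ^ (r - 1) * |t|) := by ring
    _ = ε * t ^ 2 + C * |t| ^ r := by rw [h1, abs_mul_abs_self]; ring

/-- **Mountain-pass geometry (i)** (step in the proof of Theorem 4.1): under
(g1) and (g3) there are `ρ > 0` and `α > 0` with `E_{λ,μ}(u) ≥ α` for all
`u ∈ X₀` with `‖u‖ = ρ`. -/
theorem statement17
    (n : ℕ) (s : ℝ) (hs : s ∈ Set.Ioo (0:ℝ) 1) (hn : 2 * s < n)
    (Ω : Set (EV n)) (hΩo : IsOpen Ω) (hΩne : Ω.Nonempty) (hΩb : Bornology.IsBounded Ω)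
    (K : EV n → ℝ)
    (hKpos : ∀ x : EV n, x ≠ 0 → 0 < K x)
    (hK1 : Integrable (fun x : EV n => min (‖x‖ ^ 2) 1 * K x))
    (hK2 : ∃ k₀ > 0, ∀ x : EV n, x ≠ 0 → k₀ * ‖x‖ ^ (-((n : ℝ) + 2 * s)) ≤ K x)
    (c : ℝ) (hc : 0 < c)
    (hclub : IsLUB {ρ : ℝ | ∃ u, MemX0 K Ω u ∧
        ¬ (∀ᵐ x ∂(volume : Measure (EV n)), u x = 0) ∧
        ρ = lpNorm Ω (twoStar n s) u / gNorm K u} c)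
    -- finiteness of the embedding constants `c_p`, `p ∈ [1,2*]`:
    (hemb : ∀ p : ℝ, 1 ≤ p → p ≤ twoStar n s → ∃ cp > (0:ℝ),
        ∀ u, MemX0 K Ω u → lpNorm Ω p u ≤ cp * gNorm K u)
    (lam μ : ℝ) (hlam : 0 < lam) (hμ : 0 < μ)
    (g : ℝ → ℝ) (hgc : Continuous g)
    (a₁ a₂ q : ℝ) (ha₁ : 0 < a₁) (ha₂ : 0 < a₂) (hq₁ : 1 ≤ q) (hq₂ : q < twoStar n s)
    (hg1 : ∀ t : ℝ, |g t| ≤ a₁ + a₂ * |t| ^ (q - 1))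
    -- (g3): `lim_{t→0} g(t)/t = 0`:
    (hg3 : Tendsto (fun t : ℝ => g t / t) (𝓝[≠] 0) (𝓝 0)) :
    ∃ ρ > (0:ℝ), ∃ α > (0:ℝ), ∀ u : EV n → ℝ, MemX0 K Ω u → gNorm K u = ρ →
      α ≤ energy s K Ω μ lam g u := by
  obtain ⟨hs0, hs1⟩ := hs
  have hns : (0:ℝ) < (n:ℝ) - 2 * s := by linarith
  have hn0 : (0:ℝ) < (n:ℝ) := by linarith
  have hn1 : 1 ≤ n := by
    by_contra h
    push_neg at h
    have : n = 0 := by omega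
    rw [this] at hn0
    norm_num at hn0
  set r := twoStar n s with hrdef
  have hr2 : 2 < r := by
    rw [hrdef]
    unfold twoStar
    rw [lt_div_iff₀ hns]
    nlinarith
  have hr0 : 0 < r := by linarith
  have hΩm := hΩo.measurableSet
  have hΩfin : volume Ω < ⊤ := hΩb.measure_lt_top
  obtain ⟨c₂, hc₂, hembc₂⟩ := hemb 2 one_le_two (by linarith)
  obtain ⟨cS, hcS, hembcS⟩ := hemb r (by linarith) le_rfl
  set ε := 1 / (4 * lam * c₂ ^ 2) with hεdef
  have hε : 0 < ε := by positivity
  obtain ⟨C, hC0, hgb⟩ := g_global_bound g hgc a₁ a₂ q r ha₁ ha₂ hq₁ hq₂ hr2 hg1 hg3 ε hε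
  have hGb := G_bound g hgc ε C r hε.le hC0 (by linarith) hgb
  set D := (μ / r + lam * C) * cS ^ r with hDdef
  have hD : 0 < D := by
    have h1 : 0 < μ / r := by positivity
    have h2 : 0 < cS ^ r := Real.rpow_pos_of_pos hcS r
    nlinarith [mul_nonneg hlam.le hC0]
  set ρ := min 1 ((8 * D)⁻¹ ^ (1 / (r - 2))) with hρdef
  have hρ : 0 < ρ := lt_min one_pos (Real.rpow_pos_of_pos (by positivity) _)
  refine ⟨ρ, hρ, ρ ^ 2 / 8, by positivity, fun u hu hnorm => ?_⟩
  obtain ⟨hSint, hSle⟩ := lp_bound hn1 hΩm hKpos hK1 hΩfin hr0 hcS hembcS hu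
  obtain ⟨h2int, h2le⟩ := lp_bound hn1 hΩm hKpos hK1 hΩfin two_pos hc₂ hembc₂ hu
  rw [hnorm] at hSle h2le
  set S := (cS * ρ) ^ r with hSdef
  have hS0 : 0 ≤ S := Real.rpow_nonneg (by positivity) r
  have hrpow2 : ∀ y : ℝ, y ^ (2:ℝ) = y ^ 2 := fun y => by
    rw [show (2:ℝ) = ((2:ℕ):ℝ) by norm_num, Real.rpow_natCast]
  have habs2 : ∀ x : EV n, |u x| ^ (2:ℝ) = (u x) ^ 2 := fun x => by
    rw [hrpow2, sq_abs]
  have hGu_bound : ∀ x : EV n,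
      |∫ τ in (0:ℝ)..(u x), g τ| ≤ ε * |u x| ^ (2:ℝ) + C * |u x| ^ r := by
    intro x
    rw [habs2]
    exact hGb (u x)
  have hdom : IntegrableOn (fun x => ε * |u x| ^ (2:ℝ) + C * |u x| ^ r) Ω :=
    (h2int.const_mul ε).add (hSint.const_mul C)
  have hGcont : Continuous (fun t : ℝ => ∫ τ in (0:ℝ)..t, g τ) :=
    intervalIntegral.continuous_primitive (fun a b => hgc.intervalIntegrable a b) 0
  have hGint : IntegrableOn (fun x => ∫ τ in (0:ℝ)..(u x), g τ) Ω := by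
    refine Integrable.mono' hdom
      ((hGcont.measurable.comp hu.meas).aestronglyMeasurable) ?_
    refine Filter.Eventually.of_forall fun x => ?_
    rw [Real.norm_eq_abs]
    exact hGu_bound x
  have hBle : (∫ x in Ω, ∫ τ in (0:ℝ)..(u x), g τ) ≤ ε * (c₂ * ρ) ^ (2:ℝ) + C * S := by
    calc (∫ x in Ω, ∫ τ in (0:ℝ)..(u x), g τ)
        ≤ ∫ x in Ω, (ε * |u x| ^ (2:ℝ) + C * |u x| ^ r) := by
          refine integral_mono_ae hGint hdom (Filter.Eventually.of_forall fun x => ?_)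
          exact (le_abs_self _).trans (hGu_bound x)
      _ = ε * (∫ x in Ω, |u x| ^ (2:ℝ)) + C * (∫ x in Ω, |u x| ^ r) := by
          rw [integral_add (h2int.const_mul ε) (hSint.const_mul C),
            MeasureTheory.integral_const_mul, MeasureTheory.integral_const_mul]
      _ ≤ ε * (c₂ * ρ) ^ (2:ℝ) + C * S := by
          have i1 := mul_le_mul_of_nonneg_left h2le hε.le
          have i2 := mul_le_mul_of_nonneg_left hSle hC0
          linarith
  have hc2rho : (c₂ * ρ) ^ (2:ℝ) = c₂ ^ 2 * ρ ^ 2 := by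
    rw [hrpow2, mul_pow]
  have hf6 : lam * (ε * (c₂ ^ 2 * ρ ^ 2)) = ρ ^ 2 / 4 := by
    rw [hεdef]
    field_simp
  have hSsplit : S = cS ^ r * (ρ ^ 2 * ρ ^ (r - 2)) := by
    rw [hSdef, Real.mul_rpow hcS.le hρ.le]
    have e := Real.rpow_add hρ 2 (r - 2)
    rw [show (2:ℝ) + (r - 2) = r by ring] at e
    rw [e, hrpow2]
  have hρr : ρ ^ (r - 2) ≤ (8 * D)⁻¹ := by
    have h1 : ρ ≤ (8 * D)⁻¹ ^ (1 / (r - 2)) := min_le_right _ _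
    have h2 := Real.rpow_le_rpow hρ.le h1 (by linarith : (0:ℝ) ≤ r - 2)
    rwa [← Real.rpow_mul (by positivity : (0:ℝ) ≤ (8 * D)⁻¹), one_div,
      inv_mul_cancel₀ (by linarith : r - 2 ≠ 0), Real.rpow_one] at h2
  have hf5 : (μ / r) * S + lam * (C * S) ≤ ρ ^ 2 / 8 := by
    have e1 : (μ / r) * S + lam * (C * S) = D * (ρ ^ 2 * ρ ^ (r - 2)) := by
      rw [hSsplit, hDdef]
      ring
    rw [e1]
    have h8 : D * (ρ ^ 2 * ρ ^ (r - 2)) ≤ D * (ρ ^ 2 * (8 * D)⁻¹) :=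
      mul_le_mul_of_nonneg_left (mul_le_mul_of_nonneg_left hρr (by positivity)) hD.le
    refine h8.trans (le_of_eq ?_)
    field_simp
  unfold energy
  rw [hnorm, ← hrdef]
  have hμr : (0:ℝ) < μ / r := by positivity
  have hA := mul_le_mul_of_nonneg_left hSle hμr.le
  have hB := mul_le_mul_of_nonneg_left hBle hlam.le
  rw [hc2rho, mul_add] at hB
  linarith
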